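/- Let A be an entrywise nonnegative m×n real matrix and B an entrywise nonnegative n×p real matrix. Then τ₊(AB) ≤ min(τ₊(A), τ₊(B)). -/

import Mathlib

open Matrix

/-- The set of atoms `𝒜₊(A)`: rank-at-most-one matrices `R` with `0 ≤ R ≤ A` entrywise. -/
noncomputable def Aplus {m n : Type*} [Fintype m] [Fintype n]
    (A : Matrix m n ℝ) : Set (Matrix m n ℝ) :=
  {R | R.rank ≤ 1 ∧ ∀ i j, 0 ≤ R i j ∧ R i j ≤ A i j}

/-- `τ₊(A)`: supremum of `L(A)` over linear functionals `L` with `L ≤ 1` on `𝒜₊(A)`. -/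
noncomputable def tauPlus {m n : Type*} [Fintype m] [Fintype n]
    (A : Matrix m n ℝ) : ℝ :=
  sSup {x | ∃ L : Matrix m n ℝ →ₗ[ℝ] ℝ, (∀ R ∈ Aplus A, L R ≤ 1) ∧ L A = x}

section Aux

variable {m n p : Type*} [Fintype m] [Fintype n] [Fintype p] [DecidableEq n]

lemma rank_vecMulVec_le_one (u : m → ℝ) (v : n → ℝ) :
    (Matrix.vecMulVec u v).rank ≤ 1 := by
  rw [Matrix.vecMulVec_eq (Fin 1)]
  refine le_trans (Matrix.rank_mul_le_left _ _) ?_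
  have h := Matrix.rank_le_card_width (Matrix.replicateCol (Fin 1) u)
  simp at h
  exact h

/-- Each column matrix is an atom, so `L A ≤ card n` for feasible `L`. -/
lemma LA_le_card (A : Matrix m n ℝ) (hA : ∀ i j, 0 ≤ A i j)
    (L : Matrix m n ℝ →ₗ[ℝ] ℝ) (hL : ∀ R ∈ Aplus A, L R ≤ 1) :
    L A ≤ (Fintype.card n : ℝ) := by
  have hdecomp : A = ∑ j : n, Matrix.vecMulVec (fun i => A i j)
      (fun k => if j = k then 1 else 0) := by
    ext i k
    simp [Matrix.sum_apply, Matrix.vecMulVec_apply, mul_ite, mul_one, mul_zero,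
      Finset.sum_ite_eq, Finset.mem_univ]
  calc L A = ∑ j : n, L (Matrix.vecMulVec (fun i => A i j)
        (fun k => if j = k then 1 else 0)) := by
        conv_lhs => rw [hdecomp]
        rw [map_sum]
    _ ≤ ∑ _j : n, (1 : ℝ) := by
        refine Finset.sum_le_sum fun j _ => hL _ ⟨rank_vecMulVec_le_one _ _, ?_⟩
        intro i k
        rcases eq_or_ne j k with h | h
        · subst h; simp [Matrix.vecMulVec_apply, hA i j]
        · simp [Matrix.vecMulVec_apply, h, hA i k]
    _ = (Fintype.card n : ℝ) := by simp

lemma bddAbove_tau_set (A : Matrix m n ℝ) (hA : ∀ i j, 0 ≤ A i j) :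
    BddAbove {x | ∃ L : Matrix m n ℝ →ₗ[ℝ] ℝ, (∀ R ∈ Aplus A, L R ≤ 1) ∧ L A = x} := by
  refine ⟨(Fintype.card n : ℝ), ?_⟩
  rintro x ⟨L, hL, rfl⟩
  exact LA_le_card A hA L hL

lemma zero_mem_tau_set (A : Matrix m n ℝ) :
    (0 : ℝ) ∈ {x | ∃ L : Matrix m n ℝ →ₗ[ℝ] ℝ, (∀ R ∈ Aplus A, L R ≤ 1) ∧ L A = x} :=
  ⟨0, fun _ _ => by simp, by simp⟩

lemma tauPlus_nonneg (A : Matrix m n ℝ) (hA : ∀ i j, 0 ≤ A i j) :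
    0 ≤ tauPlus A :=
  le_csSup (bddAbove_tau_set A hA) (zero_mem_tau_set A)

/-- Right multiplication by `B` as a linear map. -/
def rmulLin (B : Matrix n p ℝ) : Matrix m n ℝ →ₗ[ℝ] Matrix m p ℝ where
  toFun X := X * B
  map_add' X Y := Matrix.add_mul X Y B
  map_smul' c X := Matrix.smul_mul c X B

/-- Left multiplication by `A` as a linear map. -/
def lmulLin (A : Matrix m n ℝ) : Matrix n p ℝ →ₗ[ℝ] Matrix m p ℝ where
  toFun X := A * X
  map_add' X Y := Matrix.mul_add A X Y
  map_smul' c X := Matrix.mul_smul A c X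

end Aux

/-- product property: `τ₊(AB) ≤ min(τ₊(A), τ₊(B))`. -/
theorem stmt7 {m n p : ℕ} (A : Matrix (Fin m) (Fin n) ℝ) (B : Matrix (Fin n) (Fin p) ℝ)
    (hA : ∀ i j, 0 ≤ A i j) (hB : ∀ i j, 0 ≤ B i j) :
    tauPlus (A * B) ≤ min (tauPlus A) (tauPlus B) := by
  have hAB : ∀ i j, 0 ≤ (A * B) i j := fun i j => by
    rw [Matrix.mul_apply]
    exact Finset.sum_nonneg fun k _ => mul_nonneg (hA i k) (hB k j)
  refine le_min ?_ ?_
  · refine Real.sSup_le ?_ (tauPlus_nonneg A hA)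
    rintro x ⟨L, hL, rfl⟩
    refine le_csSup (bddAbove_tau_set A hA) ⟨L.comp (rmulLin B), ?_, rfl⟩
    rintro R ⟨hrank, hbd⟩
    refine hL (R * B) ⟨le_trans (Matrix.rank_mul_le_left R B) hrank, fun i j => ?_⟩
    simp only [Matrix.mul_apply]
    constructor
    · exact Finset.sum_nonneg fun k _ => mul_nonneg (hbd i k).1 (hB k j)
    · exact Finset.sum_le_sum fun k _ =>
        mul_le_mul_of_nonneg_right (hbd i k).2 (hB k j)
  · refine Real.sSup_le ?_ (tauPlus_nonneg B hB)
    rintro x ⟨L, hL, rfl⟩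
    refine le_csSup (bddAbove_tau_set B hB) ⟨L.comp (lmulLin A), ?_, rfl⟩
    rintro R ⟨hrank, hbd⟩
    refine hL (A * R) ⟨le_trans (Matrix.rank_mul_le_right A R) hrank, fun i j => ?_⟩
    simp only [Matrix.mul_apply]
    constructor
    · exact Finset.sum_nonneg fun k _ => mul_nonneg (hA i k) (hbd k j).1
    · exact Finset.sum_le_sum fun k _ =>
        mul_le_mul_of_nonneg_left (hbd k j).2 (hA i k)
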